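/- For every m ≥ 2, the generating function G(x,y) = Σ g_{n,k} y^k x^n, where g_{n,k} counts Dyck paths of semilength n with k up steps at height h ≡ 0 (mod m), satisfies the finite continued-fraction equation G = 1/(1 - x/(1 - x/(⋯/(1 - x/(1 - x·y·G))))) with m levels, where only the innermost x carries the weight y. -/

import Mathlib

/-- A Dyck path of semilength `n`, encoded as a list of booleans where
`true` is an up step `(1,1)` and `false` is a down step `(1,-1)`;
the path never goes below the x-axis. -/
def IsDyckPath (n : ℕ) (p : List Bool) : Prop :=
  p.length = 2 * n ∧ p.count true = n ∧
  ∀ i, (p.take i).count false ≤ (p.take i).count true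

/-- The height of the `i`-th step: the y-coordinate reached after step `i`.
For an up step this is the height `h` such that the step rises from `y = h-1` to `y = h`. -/
def stepHeight (p : List Bool) (i : ℕ) : ℕ :=
  (p.take (i + 1)).count true - (p.take (i + 1)).count false

/-- The number of up steps of `p` at height `h` with `h ≡ c (mod m)`. -/
def upStepsMod (m c : ℕ) (p : List Bool) : ℕ :=
  ((Finset.range p.length).filter
    (fun i => p.getD i false = true ∧ stepHeight p i % m = c)).card


open MvPowerSeries in
/-- `Gm m` is the generating function `Σ g_{n,k} y^k x^n` where `g_{n,k}` is the number
of Dyck paths of semilength `n` with exactly `k` up steps at height `h ≡ 0 (mod m)`;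
`X 0` is `x` and `X 1` is `y`. -/
noncomputable def Gm (m : ℕ) : MvPowerSeries (Fin 2) ℚ :=
  fun d => (Nat.card {p : List Bool // IsDyckPath (d 0) p ∧ upStepsMod m 0 p = d 1} : ℚ)

open MvPowerSeries in
/-- `cfDen G i` is the `(i+1)`-level continued-fraction denominator
`1 - x/(1 - x/(⋯/(1 - x·y·G)))`: the innermost denominator is `1 - x·y·G` and each
further level is `1 - x/(previous level)`. -/
noncomputable def cfDen (G : MvPowerSeries (Fin 2) ℚ) : ℕ → MvPowerSeries (Fin 2) ℚ
  | 0 => 1 - X 0 * X 1 * G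
  | i + 1 => 1 - X 0 * (cfDen G i)⁻¹

namespace DyckAux

/-- `l` never dips more than `h` below its start: prefix false-count ≤ h + true-count. -/
def Good (h : ℕ) (l : List Bool) : Prop :=
  ∀ i, (l.take i).count false ≤ h + (l.take i).count true

lemma count_add (l : List Bool) : l.count true + l.count false = l.length := by
  induction l with
  | nil => simp
  | cons x t ih => cases x <;> simp [List.count_cons] <;> omega

lemma good_nil (h : ℕ) : Good h [] := by intro i; simp

lemma good_tail_true {h : ℕ} {l : List Bool} (hg : Good h (true :: l)) : Good (h + 1) l := by
  intro i
  have := hg (i + 1)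
  simp only [List.take_succ_cons, List.count_cons] at this
  simp at this
  omega

lemma good_false_pos {h : ℕ} {l : List Bool} (hg : Good h (false :: l)) : 1 ≤ h := by
  have := hg 1
  simp [List.count_cons] at this
  omega

lemma good_tail_false {h : ℕ} {l : List Bool} (hg : Good h (false :: l)) : Good (h - 1) l := by
  have h1 := good_false_pos hg
  intro i
  have := hg (i + 1)
  simp only [List.take_succ_cons, List.count_cons] at this
  simp at this
  omega

lemma good_cons_true {h : ℕ} {l : List Bool} (hg : Good (h + 1) l) : Good h (true :: l) := by
  intro i
  cases i with
  | zero => simp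
  | succ j =>
    have := hg j
    simp only [List.take_succ_cons, List.count_cons]
    simp
    omega

lemma good_cons_false {h : ℕ} {l : List Bool} (hh : 1 ≤ h) (hg : Good (h - 1) l) :
    Good h (false :: l) := by
  intro i
  cases i with
  | zero => simp
  | succ j =>
    have := hg j
    simp only [List.take_succ_cons, List.count_cons]
    simp
    omega

lemma good_mono {h h' : ℕ} {l : List Bool} (hh : h ≤ h') (hg : Good h l) : Good h' l :=
  fun i => le_trans (hg i) (by omega)

lemma good_append {l1 l2 : List Bool} {h : ℕ} (hg1 : Good h l1)
    (hg2 : Good (h + l1.count true - l1.count false) l2) : Good h (l1 ++ l2) := by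
  induction l1 generalizing h with
  | nil => simpa using hg2
  | cons x t ih =>
    cases x with
    | true =>
      apply good_cons_true
      apply ih (good_tail_true hg1)
      have : h + (true :: t).count true - (true :: t).count false
          = h + 1 + t.count true - t.count false := by
        simp [List.count_cons]; omega
      rw [this] at hg2
      exact hg2
    | false =>
      have h1 := good_false_pos hg1
      apply good_cons_false h1
      apply ih (good_tail_false hg1)
      have : h + (false :: t).count true - (false :: t).count false
          = h - 1 + t.count true - t.count false := by
        simp [List.count_cons]; omega
      rw [this] at hg2
      exact hg2


/-- Count of up steps with height ≡ c mod m, starting from height `h`. -/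
def cnt (m c h : ℕ) (l : List Bool) : ℕ :=
  ((Finset.range l.length).filter
    (fun i => l.getD i false = true ∧
      (h + (l.take (i + 1)).count true - (l.take (i + 1)).count false) % m = c)).card

lemma ups_eq_cnt (m c : ℕ) (p : List Bool) : upStepsMod m c p = cnt m c 0 p := by
  unfold upStepsMod cnt stepHeight
  congr 1
  apply Finset.filter_congr
  intro i _
  simp

lemma cnt_nil (m c h : ℕ) : cnt m c h [] = 0 := by simp [cnt]

lemma cnt_cons_true (m c h : ℕ) (t : List Bool) :
    cnt m c h (true :: t) = (if (h + 1) % m = c then 1 else 0) + cnt m c (h + 1) t := by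
  unfold cnt
  rw [Finset.card_filter, Finset.card_filter, List.length_cons, Finset.sum_range_succ']
  have hterm : ∀ i, (if ((true :: t).getD (i+1) false = true ∧
      (h + ((true :: t).take (i + 1 + 1)).count true -
        ((true :: t).take (i + 1 + 1)).count false) % m = c) then 1 else 0)
      = (if (t.getD i false = true ∧
      (h + 1 + (t.take (i + 1)).count true - (t.take (i + 1)).count false) % m = c)
        then 1 else 0) := by
    intro i
    have harith : h + ((t.take (i+1)).count true + 1) - (t.take (i+1)).count false
        = h + 1 + (t.take (i+1)).count true - (t.take (i+1)).count false := by omega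
    simp only [List.getD_cons_succ, List.take_succ_cons, List.count_cons]
    simp only [show ((true == true) = true) from rfl, show ((true == false) = true) ↔ False by simp]
    simp only [if_true, if_false, Nat.add_zero]
    rw [harith]
  have h0 : (if ((true :: t).getD 0 false = true ∧
      (h + ((true :: t).take (0 + 1)).count true -
        ((true :: t).take (0 + 1)).count false) % m = c) then 1 else 0)
      = (if (h + 1) % m = c then 1 else 0) := by
    simp [List.count_cons]
  rw [Finset.sum_congr rfl (fun i _ => hterm i), h0]
  omega

lemma cnt_cons_false (m c h : ℕ) (hh : 1 ≤ h) (t : List Bool) :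
    cnt m c h (false :: t) = cnt m c (h - 1) t := by
  unfold cnt
  rw [Finset.card_filter, Finset.card_filter, List.length_cons, Finset.sum_range_succ']
  have hterm : ∀ i, (if ((false :: t).getD (i+1) false = true ∧
      (h + ((false :: t).take (i + 1 + 1)).count true -
        ((false :: t).take (i + 1 + 1)).count false) % m = c) then 1 else 0)
      = (if (t.getD i false = true ∧
      (h - 1 + (t.take (i + 1)).count true - (t.take (i + 1)).count false) % m = c)
        then 1 else 0) := by
    intro i
    have harith : h + (t.take (i+1)).count true - ((t.take (i+1)).count false + 1)
        = h - 1 + (t.take (i+1)).count true - (t.take (i+1)).count false := by omega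
    simp only [List.getD_cons_succ, List.take_succ_cons, List.count_cons]
    simp only [show ((false == true) = true) ↔ False by simp,
      show ((false == false) = true) from rfl]
    simp only [if_true, if_false, Nat.add_zero]
    rw [harith]
  have h0 : (if ((false :: t).getD 0 false = true ∧
      (h + ((false :: t).take (0 + 1)).count true -
        ((false :: t).take (0 + 1)).count false) % m = c) then 1 else 0) = 0 := by
    simp
  rw [Finset.sum_congr rfl (fun i _ => hterm i), h0]
  omega


lemma cnt_append (m c : ℕ) (l2 : List Bool) :
    ∀ (l1 : List Bool) (h : ℕ), Good h l1 →
      cnt m c h (l1 ++ l2) = cnt m c h l1 + cnt m c (h + l1.count true - l1.count false) l2 := by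
  intro l1
  induction l1 with
  | nil => intro h _; simp [cnt_nil]
  | cons x t ih =>
    intro h hg
    cases x with
    | true =>
      rw [List.cons_append, cnt_cons_true, cnt_cons_true, ih (h+1) (good_tail_true hg)]
      have : h + (true :: t).count true - (true :: t).count false
          = h + 1 + t.count true - t.count false := by simp [List.count_cons]; omega
      rw [this]
      omega
    | false =>
      have h1 := good_false_pos hg
      rw [List.cons_append, cnt_cons_false m c h h1, cnt_cons_false m c h h1,
        ih (h-1) (good_tail_false hg)]
      have : h + (false :: t).count true - (false :: t).count false
          = h - 1 + t.count true - t.count false := by simp [List.count_cons]; omega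
      rw [this]

lemma mod_shift {m c : ℕ} (hm : 1 ≤ m) (hc : c < m) (x : ℕ) :
    (x + 1) % m = c ↔ x % m = (c + (m - 1)) % m := by
  have hcm : c % m = c := Nat.mod_eq_of_lt hc
  constructor
  · intro h
    have h1 : (x + 1) % m = c % m := by rw [h, hcm]
    have h2 : Nat.ModEq m (x + 1) c := h1
    have h3 : Nat.ModEq m (x + 1 + (m - 1)) (c + (m - 1)) := Nat.ModEq.add_right _ h2
    have h4 : x + 1 + (m - 1) = x + m := by omega
    rw [h4] at h3
    have h5 : (x + m) % m = x % m := Nat.add_mod_right x m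
    have h6 : Nat.ModEq m x (c + (m - 1)) := by
      unfold Nat.ModEq at h3 ⊢
      omega
    exact h6
  · intro h
    have h2 : Nat.ModEq m x (c + (m - 1)) := h
    have h3 : Nat.ModEq m (x + 1) (c + (m - 1) + 1) := Nat.ModEq.add_right _ h2
    have h4 : c + (m - 1) + 1 = c + m := by omega
    rw [h4] at h3
    have h5 : (c + m) % m = c % m := Nat.add_mod_right c m
    unfold Nat.ModEq at h3
    omega

lemma cnt_shift {m c : ℕ} (hm : 1 ≤ m) (hc : c < m) (l : List Bool) (h : ℕ)
    (hg : Good h l) :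
    cnt m c (h + 1) l = cnt m ((c + (m - 1)) % m) h l := by
  unfold cnt
  congr 1
  apply Finset.filter_congr
  intro i hi
  have hgood := hg (i + 1)
  have harith : h + 1 + (l.take (i+1)).count true - (l.take (i+1)).count false
      = (h + (l.take (i+1)).count true - (l.take (i+1)).count false) + 1 := by omega
  rw [harith]
  show _ ↔ _
  constructor
  · rintro ⟨h1, h2⟩; exact ⟨h1, (mod_shift hm hc _).1 h2⟩
  · rintro ⟨h1, h2⟩; exact ⟨h1, (mod_shift hm hc _).2 h2⟩


lemma dyck_good {n : ℕ} {p : List Bool} (hp : IsDyckPath n p) : Good 0 p := by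
  intro i; simpa using hp.2.2 i

lemma dyck_count_false {n : ℕ} {p : List Bool} (hp : IsDyckPath n p) : p.count false = n := by
  have := count_add p
  have h1 := hp.1
  have h2 := hp.2.1
  omega

lemma dyck_nil : IsDyckPath 0 [] := by refine ⟨by simp, by simp, by simp⟩

lemma dyck_zero {p : List Bool} (hp : IsDyckPath 0 p) : p = [] :=
  List.eq_nil_of_length_eq_zero (by simpa using hp.1)

lemma first_true {n : ℕ} {p : List Bool} (hp : IsDyckPath n p) (hn : 1 ≤ n) :
    ∃ t, p = true :: t := by
  match p, hp with
  | [], hp => exfalso; have := hp.1; simp at this; omega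
  | false :: t, hp =>
    exfalso
    have := hp.2.2 1
    simp [List.count_cons] at this
  | true :: t, hp => exact ⟨t, rfl⟩

lemma dyck_compose {n1 n2 : ℕ} {p1 p2 : List Bool}
    (h1 : IsDyckPath n1 p1) (h2 : IsDyckPath n2 p2) :
    IsDyckPath (n1 + n2 + 1) (true :: (p1 ++ false :: p2)) := by
  have hc1 := h1.2.1
  have hf1 := dyck_count_false h1
  have hc2 := h2.2.1
  have hf2 := dyck_count_false h2
  have hl1 := h1.1
  have hl2 := h2.1
  refine ⟨?_, ?_, ?_⟩
  · simp [List.length_append]; omega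
  · simp [List.count_cons, List.count_append]; omega
  · have hg : Good 0 (true :: (p1 ++ false :: p2)) := by
      apply good_cons_true
      apply good_append (good_mono (by omega) (dyck_good h1))
      rw [hc1, hf1]
      have : 0 + 1 + n1 - n1 = 1 := by omega
      rw [this]
      exact good_cons_false le_rfl (by simpa using dyck_good h2)
    intro i; simpa using hg i

lemma stat_decomp {m c n1 n2 : ℕ} {p1 p2 : List Bool} (hm : 2 ≤ m) (hc : c < m)
    (h1 : IsDyckPath n1 p1) (h2 : IsDyckPath n2 p2) :
    upStepsMod m c (true :: (p1 ++ false :: p2))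
      = (if c = 1 then 1 else 0) + upStepsMod m ((c + (m - 1)) % m) p1 + upStepsMod m c p2 := by
  have hm1 : (1 : ℕ) ≤ m := by omega
  rw [ups_eq_cnt, ups_eq_cnt, ups_eq_cnt]
  rw [cnt_cons_true]
  rw [cnt_append m c _ p1 1 (good_mono (by omega) (dyck_good h1))]
  rw [h1.2.1, dyck_count_false h1]
  have e1 : 1 + n1 - n1 = 1 := by omega
  rw [e1, cnt_cons_false m c 1 le_rfl]
  have e2 : (1 : ℕ) - 1 = 0 := rfl
  rw [e2]
  have e3 : cnt m c 1 p1 = cnt m ((c + (m - 1)) % m) 0 p1 := by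
    have := cnt_shift hm1 hc p1 0 (dyck_good h1)
    simpa using this
  rw [e3]
  have e4 : (0 + 1) % m = c ↔ c = 1 := by
    have : (1 : ℕ) % m = 1 := Nat.mod_eq_of_lt (by omega)
    simp [this, eq_comm]
  rw [if_congr e4 rfl rfl]
  omega


lemma decomp_unique {n1 n1' : ℕ} {p1 q1 p2 q2 : List Bool}
    (h1 : IsDyckPath n1 p1) (h1' : IsDyckPath n1' q1)
    (heq : p1 ++ false :: p2 = q1 ++ false :: q2) : p1 = q1 ∧ p2 = q2 := by
  have key : ∀ {a a' : ℕ} {x1 y1 x2 y2 : List Bool}, IsDyckPath a x1 → IsDyckPath a' y1 →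
      x1 ++ false :: x2 = y1 ++ false :: y2 → x1.length < y1.length → False := by
    intro a a' x1 y1 x2 y2 hx hy he hlt
    have htake : (x1 ++ false :: x2).take (x1.length + 1) = x1 ++ [false] := by
      rw [List.take_append]
      simp
    have htake2 : (y1 ++ false :: y2).take (x1.length + 1) = y1.take (x1.length + 1) := by
      apply List.take_append_of_le_length
      omega
    have h3 : y1.take (x1.length + 1) = x1 ++ [false] := by
      rw [← htake2, ← he, htake]
    have := hy.2.2 (x1.length + 1)
    rw [h3] at this
    simp [List.count_append, hx.2.1, dyck_count_false hx] at this
  constructor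
  · have hlen : p1.length = q1.length := by
      rcases lt_trichotomy p1.length q1.length with h | h | h
      · exact (key h1 h1' heq h).elim
      · exact h
      · exact (key h1' h1 heq.symm h).elim
    exact (List.append_inj heq hlen).1
  · have hlen : p1.length = q1.length := by
      rcases lt_trichotomy p1.length q1.length with h | h | h
      · exact (key h1 h1' heq h).elim
      · exact h
      · exact (key h1' h1 heq.symm h).elim
    have := (List.append_inj heq hlen).2
    simpa using this

lemma ups_ne_zero {m n : ℕ} {p : List Bool} (hm : 2 ≤ m) (hp : IsDyckPath n p) (hn : 1 ≤ n) :
    upStepsMod m 1 p ≠ 0 := by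
  obtain ⟨t, rfl⟩ := first_true hp hn
  have hmem : 0 ∈ (Finset.range (true :: t).length).filter
      (fun i => (true :: t).getD i false = true ∧ stepHeight (true :: t) i % m = 1) := by
    rw [Finset.mem_filter]
    refine ⟨by simp, by simp, ?_⟩
    unfold stepHeight
    simp
    exact Nat.mod_eq_of_lt (by omega)
  unfold upStepsMod
  exact Finset.card_ne_zero_of_mem hmem

lemma exists_decomp {n : ℕ} {p : List Bool} (hp : IsDyckPath n p) (hn : 1 ≤ n) :
    ∃ n1 n2 p1 p2, IsDyckPath n1 p1 ∧ IsDyckPath n2 p2 ∧ n1 + n2 + 1 = n ∧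
      p = true :: (p1 ++ false :: p2) := by
  obtain ⟨t, rfl⟩ := first_true hp hn
  have hlen : t.length = 2 * n - 1 := by have := hp.1; simp at this; omega
  have hct : t.count true = n - 1 := by have := hp.2.1; simp [List.count_cons] at this; omega
  have hcf : t.count false = n := by
    have := count_add t; omega
  -- prefix counts of p in terms of t
  have hpre : ∀ i, ((true :: t).take (i + 1)).count false ≤ ((true :: t).take (i+1)).count true :=
    fun i => hp.2.2 (i + 1)
  have hpre' : ∀ i, (t.take i).count false ≤ 1 + (t.take i).count true := by
    intro i
    have := hpre i
    simp [List.count_cons] at this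
    omega
  -- P j : prefix of t of length j+1 has cf = 1 + ct (i.e. full path balanced at 1 + (j+1))
  have hex : ∃ j, (t.take (j + 1)).count false = 1 + (t.take (j + 1)).count true := by
    refine ⟨t.length - 1, ?_⟩
    have h2 : 1 ≤ t.length := by omega
    have : t.length - 1 + 1 = t.length := by omega
    rw [this, List.take_length]
    omega
  classical
  set j0 := Nat.find hex with hj0def
  have hj0 : (t.take (j0 + 1)).count false = 1 + (t.take (j0 + 1)).count true := Nat.find_spec hex
  have hj0min : ∀ j, j < j0 → (t.take (j + 1)).count false ≠ 1 + (t.take (j + 1)).count true :=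
    fun j hj => Nat.find_min hex hj
  have hj0len : j0 + 1 ≤ t.length := by
    have := Nat.find_min' hex (m := t.length - 1) (by
      have h2 : 1 ≤ t.length := by omega
      have h3 : t.length - 1 + 1 = t.length := by omega
      rw [h3, List.take_length]; omega)
    omega
  -- the element at index j0 is false
  set p1 := t.take j0 with hp1def
  set p2 := t.drop (j0 + 1) with hp2def
  have hget : t[j0]'(by omega) = false := by
    by_contra hgt
    have hgt' : t[j0]'(by omega) = true := by
      cases h : t[j0]'(by omega) <;> simp [h] at hgt ⊢
    have htk : t.take (j0 + 1) = t.take j0 ++ [t[j0]'(by omega)] := by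
      rw [List.take_succ]
      simp [List.getElem?_eq_getElem (by omega : j0 < t.length)]
    rw [htk, hgt'] at hj0
    simp [List.count_append] at hj0
    -- cf(take j0) = 1 + ct(take j0) + 1 contradicts prefix bound
    have := hpre' j0
    omega
  have hsplit : t = p1 ++ false :: p2 := by
    rw [hp1def, hp2def]
    conv_lhs => rw [← List.take_append_drop j0 t]
    congr 1
    rw [List.drop_eq_getElem_cons (by omega : j0 < t.length), hget]
  -- counts in p1
  have hbal : (t.take j0).count false = (t.take j0).count true := by
    have htk : t.take (j0 + 1) = t.take j0 ++ [t[j0]'(by omega)] := by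
      rw [List.take_succ]
      simp [List.getElem?_eq_getElem (by omega : j0 < t.length)]
    rw [htk, hget] at hj0
    simp [List.count_append] at hj0
    have := hpre' j0
    omega
  have hp1len : p1.length = j0 := by rw [hp1def]; simp; omega
  set n1 := p1.count true with hn1def
  have hd1 : IsDyckPath n1 p1 := by
    refine ⟨?_, rfl, ?_⟩
    · have hca := count_add p1
      have hb2 : p1.count false = n1 := hbal
      omega
    · intro i
      rcases le_or_gt i j0 with hi | hi
      · have hti : p1.take i = t.take i := by
          rw [hp1def, List.take_take]
          congr 1
          omega
        rw [hti]
        rcases Nat.eq_zero_or_pos i with rfl | hipos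
        · simp
        · have hne : (t.take i).count false ≠ 1 + (t.take i).count true := by
            have h5 := hj0min (i - 1) (by omega)
            have h6 : i - 1 + 1 = i := by omega
            rwa [h6] at h5
          have := hpre' i
          omega
      · rw [List.take_of_length_le (by omega)]
        have hb2 : p1.count false = p1.count true := hbal
        omega
  set n2 := p2.count true with hn2def
  have hd2 : IsDyckPath n2 p2 := by
    refine ⟨?_, rfl, ?_⟩
    · have hcf2 : p2.count false = n2 := by
        have h1 : t.count true = p1.count true + 1 * 0 + p2.count true := by
          conv_lhs => rw [hsplit]
          simp [List.count_append, List.count_cons]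
        have h2 : t.count false = p1.count false + 1 + p2.count false := by
          conv_lhs => rw [hsplit]
          simp [List.count_append, List.count_cons]; omega
        have h3 : p1.count false = p1.count true := by rw [hp1def]; exact hbal
        omega
      have := count_add p2
      omega
    · intro i
      have hti : p2.take i = (t.drop (j0+1)).take i := by rw [hp2def]
      have htt : t.take (j0 + 1 + i) = t.take (j0+1) ++ (t.drop (j0+1)).take i :=
        List.take_add
      have hpp := hpre' (j0 + 1 + i)
      rw [htt] at hpp
      simp [List.count_append] at hpp
      rw [hti]
      omega
  refine ⟨n1, n2, p1, p2, hd1, hd2, ?_, by rw [hsplit]⟩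
  · -- semilengths add up
    have h1 : t.count true = n1 + n2 := by
      conv_lhs => rw [hsplit]
      simp [List.count_append, List.count_cons, hn1def, hn2def]
    omega


/-! ### Finsupp on `Fin 2` helpers -/

noncomputable def fin2 (a b : ℕ) : Fin 2 →₀ ℕ := Finsupp.single 0 a + Finsupp.single 1 b

lemma fin2_apply0 (a b : ℕ) : fin2 a b 0 = a := by
  simp [fin2, Finsupp.single_apply]

lemma fin2_apply1 (a b : ℕ) : fin2 a b 1 = b := by
  simp [fin2, Finsupp.single_apply]

lemma finsupp2_ext {f g : Fin 2 →₀ ℕ} (h0 : f 0 = g 0) (h1 : f 1 = g 1) : f = g :=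
  Finsupp.ext fun i => by fin_cases i <;> assumption

lemma finsupp2_zero_iff {d : Fin 2 →₀ ℕ} : d = 0 ↔ d 0 = 0 ∧ d 1 = 0 := by
  constructor
  · rintro rfl; simp
  · rintro ⟨h0, h1⟩; exact finsupp2_ext (by simpa using h0) (by simpa using h1)

/-! ### Counting Dyck paths -/

abbrev DSet (m n c k : ℕ) : Type := {p : List Bool // IsDyckPath n p ∧ upStepsMod m c p = k}

instance finite_dyck (m n c k : ℕ) : Finite (DSet m n c k) := by
  have hsub : {p : List Bool | IsDyckPath n p ∧ upStepsMod m c p = k}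
      ⊆ {l : List Bool | l.length = 2 * n} := fun p hp => hp.1.1
  exact ((List.finite_length_eq Bool (2 * n)).subset hsub).to_subtype

lemma card_zero (m c k : ℕ) : Nat.card (DSet m 0 c k) = if k = 0 then 1 else 0 := by
  rcases eq_or_ne k 0 with rfl | hk
  · rw [if_pos rfl]
    have hd : DSet m 0 c 0 := ⟨[], dyck_nil, by simp [upStepsMod]⟩
    have : Unique (DSet m 0 c 0) :=
      { default := hd
        uniq := fun q => Subtype.ext ((dyck_zero q.2.1).trans (dyck_zero hd.2.1).symm) }
    exact Nat.card_unique
  · rw [if_neg hk]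
    have : IsEmpty (DSet m 0 c k) := ⟨fun q => by
      obtain ⟨p, hp, hs⟩ := q
      rw [dyck_zero hp] at hs
      simp [upStepsMod] at hs
      exact hk hs.symm⟩
    exact Nat.card_of_isEmpty

lemma card_k1 {m n : ℕ} (hm : 2 ≤ m) (hn : 1 ≤ n) : Nat.card (DSet m n 1 0) = 0 := by
  have : IsEmpty (DSet m n 1 0) := ⟨fun q => ups_ne_zero hm q.2.1 hn q.2.2⟩
  exact Nat.card_of_isEmpty

lemma nat_card_sigma {ι : Type*} [Fintype ι] (f : ι → Type*) [∀ i, Finite (f i)] :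
    Nat.card (Σ i, f i) = ∑ i, Nat.card (f i) := by
  letI : ∀ i, Fintype (f i) := fun i => Fintype.ofFinite _
  simp [Nat.card_eq_fintype_card, Fintype.card_sigma]

lemma card_decomp (m c : ℕ) (hm : 2 ≤ m) (hc : c < m) (D : Fin 2 →₀ ℕ) :
    Nat.card (DSet m (D 0 + 1) c (D 1 + (if c = 1 then 1 else 0)))
      = ∑ uv ∈ Finset.HasAntidiagonal.antidiagonal D,
          Nat.card (DSet m (uv.1 0) ((c + (m - 1)) % m) (uv.1 1))
            * Nat.card (DSet m (uv.2 0) c (uv.2 1)) := by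
  classical
  set δ := if c = 1 then 1 else 0 with hδ
  let T : Type := Σ uv : (Finset.HasAntidiagonal.antidiagonal D : Finset ((Fin 2 →₀ ℕ) × (Fin 2 →₀ ℕ))),
    (DSet m (uv.1.1 0) ((c + (m - 1)) % m) (uv.1.1 1)) × (DSet m (uv.1.2 0) c (uv.1.2 1))
  have gprop : ∀ t : T, IsDyckPath (D 0 + 1) (true :: (t.2.1.1 ++ false :: t.2.2.1)) ∧
      upStepsMod m c (true :: (t.2.1.1 ++ false :: t.2.2.1)) = D 1 + δ := by
    rintro ⟨⟨⟨u, v⟩, huv⟩, ⟨p1, hpa, hsa⟩, ⟨p2, hpb, hsb⟩⟩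
    rw [Finset.HasAntidiagonal.mem_antidiagonal] at huv
    have hp1 : IsDyckPath (u 0) p1 := hpa
    have hs1 : upStepsMod m ((c + (m - 1)) % m) p1 = u 1 := hsa
    have hp2 : IsDyckPath (v 0) p2 := hpb
    have hs2 : upStepsMod m c p2 = v 1 := hsb
    have h0 : u 0 + v 0 = D 0 := by rw [← huv]; simp
    have h1 : u 1 + v 1 = D 1 := by rw [← huv]; simp
    constructor
    · have hcomp := dyck_compose hp1 hp2
      have he : u 0 + v 0 + 1 = D 0 + 1 := by omega
      rwa [he] at hcomp
    · show upStepsMod m c (true :: (p1 ++ false :: p2)) = D 1 + δ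
      rw [stat_decomp hm hc hp1 hp2, hs1, hs2, ← hδ]
      omega
  let g : T → DSet m (D 0 + 1) c (D 1 + δ) :=
    fun t => ⟨true :: (t.2.1.1 ++ false :: t.2.2.1), gprop t⟩
  have hbij : Function.Bijective g := by
    constructor
    · rintro ⟨⟨⟨u, v⟩, huv⟩, ⟨p1, hpa, hsa⟩, ⟨p2, hpb, hsb⟩⟩
        ⟨⟨⟨u', v'⟩, huv'⟩, ⟨q1, hqa, hta⟩, ⟨q2, hqb, htb⟩⟩ heq
      have hp1 : IsDyckPath (u 0) p1 := hpa
      have hs1 : upStepsMod m ((c + (m - 1)) % m) p1 = u 1 := hsa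
      have hp2 : IsDyckPath (v 0) p2 := hpb
      have hs2 : upStepsMod m c p2 = v 1 := hsb
      have hq1 : IsDyckPath (u' 0) q1 := hqa
      have ht1 : upStepsMod m ((c + (m - 1)) % m) q1 = u' 1 := hta
      have hq2 : IsDyckPath (v' 0) q2 := hqb
      have ht2 : upStepsMod m c q2 = v' 1 := htb
      have heq' : true :: (p1 ++ false :: p2) = true :: (q1 ++ false :: q2) :=
        congrArg Subtype.val heq
      have heq'' : p1 ++ false :: p2 = q1 ++ false :: q2 := by injection heq'
      obtain ⟨e1, e2⟩ := decomp_unique hp1 hq1 heq''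
      subst e1; subst e2
      have hu : u = u' := by
        apply finsupp2_ext
        · have l1 := hp1.1; have l2 := hq1.1; omega
        · rw [← hs1, ← ht1]
      have hv : v = v' := by
        apply finsupp2_ext
        · have l1 := hp2.1; have l2 := hq2.1; omega
        · rw [← hs2, ← ht2]
      subst hu; subst hv
      rfl
    · rintro ⟨p, hp, hs⟩
      obtain ⟨n1, n2, p1, p2, hd1, hd2, hsum, rfl⟩ := exists_decomp hp (by omega)
      have hstat := stat_decomp hm hc hd1 hd2
      set k1 := upStepsMod m ((c + (m - 1)) % m) p1 with hk1
      set k2 := upStepsMod m c p2 with hk2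
      have hk : k1 + k2 = D 1 := by
        rw [hstat, ← hδ] at hs
        omega
      refine ⟨⟨⟨(fin2 n1 k1, fin2 n2 k2), ?_⟩,
        ⟨p1, ?_, ?_⟩, ⟨p2, ?_, ?_⟩⟩, ?_⟩
      · rw [Finset.HasAntidiagonal.mem_antidiagonal]
        apply finsupp2_ext
        · simp only [Finsupp.add_apply, fin2_apply0]; omega
        · simp only [Finsupp.add_apply, fin2_apply1]; omega
      · show IsDyckPath (fin2 n1 k1 0) p1
        rw [fin2_apply0]; exact hd1
      · show upStepsMod m ((c + (m - 1)) % m) p1 = fin2 n1 k1 1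
        rw [fin2_apply1]
      · show IsDyckPath (fin2 n2 k2 0) p2
        rw [fin2_apply0]; exact hd2
      · show upStepsMod m c p2 = fin2 n2 k2 1
        rw [fin2_apply1]
      · exact Subtype.ext rfl
  have hcard := Nat.card_eq_of_bijective g hbij
  rw [← hcard]
  have hsig := nat_card_sigma
    (ι := (Finset.HasAntidiagonal.antidiagonal D : Finset ((Fin 2 →₀ ℕ) × (Fin 2 →₀ ℕ))))
    (fun uv => (DSet m (uv.1.1 0) ((c + (m - 1)) % m) (uv.1.1 1))
      × (DSet m (uv.1.2 0) c (uv.1.2 1)))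
  rw [show (T : Type) = _ from rfl, hsig]
  rw [← Finset.sum_coe_sort (Finset.HasAntidiagonal.antidiagonal D)]
  apply Finset.sum_congr rfl
  intro uv _
  exact Nat.card_prod _ _


/-! ### Generating functions -/

open MvPowerSeries

noncomputable def Fc (m c : ℕ) : MvPowerSeries (Fin 2) ℚ :=
  fun d => (Nat.card (DSet m (d 0) c (d 1)) : ℚ)

lemma coeff_Fc (m c : ℕ) (d : Fin 2 →₀ ℕ) :
    MvPowerSeries.coeff d (Fc m c) = (Nat.card (DSet m (d 0) c (d 1)) : ℚ) := rfl

lemma monomial_eq (c : ℕ) :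
    (X (0 : Fin 2) : MvPowerSeries (Fin 2) ℚ) * (if c = 1 then X 1 else 1)
      = monomial (fin2 1 (if c = 1 then 1 else 0)) 1 := by
  rcases eq_or_ne c 1 with rfl | hcne
  · rw [if_pos rfl, if_pos rfl, X_def, X_def, monomial_mul_monomial, one_mul]
    rfl
  · simp only [if_neg hcne]
    rw [mul_one, X_def]
    congr 1
    simp [fin2]

lemma le_fin2_iff (δ : ℕ) (d : Fin 2 →₀ ℕ) : fin2 1 δ ≤ d ↔ 1 ≤ d 0 ∧ δ ≤ d 1 := by
  rw [Finsupp.le_def]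
  constructor
  · intro h
    exact ⟨by simpa [fin2_apply0] using h 0, by simpa [fin2_apply1] using h 1⟩
  · rintro ⟨h0, h1⟩ i
    fin_cases i
    · simpa [fin2_apply0] using h0
    · simpa [fin2_apply1] using h1

lemma Fc_eq (m c : ℕ) (hm : 2 ≤ m) (hc : c < m) :
    Fc m c = 1 + (X (0 : Fin 2) * (if c = 1 then X 1 else 1)
        * Fc m ((c + (m - 1)) % m)) * Fc m c := by
  classical
  rw [mul_assoc, monomial_eq]
  apply MvPowerSeries.ext; intro d
  rw [map_add, MvPowerSeries.coeff_one, MvPowerSeries.coeff_monomial_mul, coeff_Fc]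
  by_cases h0 : 1 ≤ d 0 ∧ (if c = 1 then 1 else 0) ≤ d 1
  · rw [if_pos ((le_fin2_iff _ d).2 h0), if_neg
      (show ¬ d = 0 from fun h => by have := (finsupp2_zero_iff.1 h).1; omega), one_mul]
    rw [MvPowerSeries.coeff_mul]
    have hD0 : (d - fin2 1 (if c = 1 then 1 else 0)) 0 + 1 = d 0 := by
      rw [Finsupp.tsub_apply, fin2_apply0]; omega
    have hD1 : (d - fin2 1 (if c = 1 then 1 else 0)) 1 + (if c = 1 then 1 else 0) = d 1 := by
      rw [Finsupp.tsub_apply, fin2_apply1]; omega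
    rw [← hD0, ← hD1, card_decomp m c hm hc, Nat.cast_sum, zero_add]
    apply Finset.sum_congr rfl
    intro uv _
    rw [Nat.cast_mul]
    rfl
  · rw [if_neg (fun hle => h0 ((le_fin2_iff _ d).1 hle)), add_zero]
    by_cases hd0 : d 0 = 0
    · rw [hd0, card_zero]
      by_cases hk : d 1 = 0
      · rw [if_pos hk, if_pos (finsupp2_zero_iff.2 ⟨hd0, hk⟩)]; norm_num
      · rw [if_neg hk, if_neg (fun h => hk (finsupp2_zero_iff.1 h).2)]; norm_num
    · have hc1 : c = 1 := by
        by_contra h1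
        have : (if c = 1 then 1 else 0) = 0 := if_neg h1
        omega
      have hd1 : d 1 = 0 := by
        rw [hc1] at h0; simp at h0; omega
      subst hc1
      rw [hd1, card_k1 hm (by omega : 1 ≤ d 0)]
      rw [if_neg (fun h => hd0 (finsupp2_zero_iff.1 h).1)]
      norm_num

lemma solve_inv {A B : MvPowerSeries (Fin 2) ℚ}
    (hB : constantCoeff B = 0) (h : A = 1 + B * A) : A = (1 - B)⁻¹ := by
  rw [MvPowerSeries.eq_inv_iff_mul_eq_one (by
    rw [map_sub, map_one, hB, sub_zero]; exact one_ne_zero)]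
  calc A * (1 - B) = (1 + B * A) - B * A := by rw [← h]; ring
    _ = 1 := by ring

lemma chain (m : ℕ) (hm : 2 ≤ m) :
    ∀ c, 1 ≤ c → c ≤ m - 1 → Fc m c = (cfDen (Fc m 0) (c - 1))⁻¹ := by
  intro c
  induction c with
  | zero => omega
  | succ c ih =>
    intro _ hle
    rcases Nat.eq_zero_or_pos c with rfl | hc
    · have key := Fc_eq m 1 hm (by omega : 1 < m)
      rw [if_pos rfl] at key
      have hprev : (1 + (m - 1)) % m = 0 := by
        rw [show 1 + (m - 1) = m from by omega, Nat.mod_self]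
      rw [hprev] at key
      have hB : constantCoeff
          (X (0 : Fin 2) * X 1 * Fc m 0) = 0 := by
        rw [map_mul, map_mul, constantCoeff_X, zero_mul, zero_mul]
      have hsolve := solve_inv hB key
      rw [hsolve]
      rfl
    · have key := Fc_eq m (c + 1) hm (by omega : c + 1 < m)
      rw [if_neg (by omega : ¬ c + 1 = 1), mul_one] at key
      have hprev : (c + 1 + (m - 1)) % m = c := by
        rw [show c + 1 + (m - 1) = c + m from by omega, Nat.add_mod_right]
        exact Nat.mod_eq_of_lt (by omega)
      rw [hprev] at key
      have hB : constantCoeff (X (0 : Fin 2) * Fc m c) = 0 := by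
        rw [map_mul, constantCoeff_X, zero_mul]
      have hsolve := solve_inv hB key
      rw [hsolve, ih (by omega) (by omega)]
      rw [show c + 1 - 1 = (c - 1) + 1 from by omega]
      rfl

end DyckAux

/-- For `m ≥ 2`, the generating function `Gm m` satisfies the `m`-level
continued-fraction equation `Gm m = 1/(1 - x/(1 - x/(⋯/(1 - x·y·(Gm m)))))`,
where only the innermost `x` carries the weight `y`. -/
theorem Gm_continued_fraction (m : ℕ) (hm : 2 ≤ m) :
    Gm m = (cfDen (Gm m) (m - 1))⁻¹ := by
  obtain ⟨j, hj⟩ : ∃ j, m - 1 = j + 1 := ⟨m - 2, by omega⟩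
  have hG : Gm m = DyckAux.Fc m 0 := rfl
  have key := DyckAux.Fc_eq m 0 hm (by omega : 0 < m)
  rw [if_neg (by omega : ¬ (0:ℕ) = 1), mul_one] at key
  have hprev : (0 + (m - 1)) % m = m - 1 := by
    rw [Nat.zero_add]; exact Nat.mod_eq_of_lt (by omega)
  rw [hprev] at key
  have hchain := DyckAux.chain m hm (m - 1) (by omega) le_rfl
  have hj2 : m - 1 - 1 = j := by omega
  rw [hj2] at hchain
  rw [hchain] at key
  have hB : MvPowerSeries.constantCoeff
      (MvPowerSeries.X (0 : Fin 2) * (cfDen (DyckAux.Fc m 0) j)⁻¹) = 0 := by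
    rw [map_mul, MvPowerSeries.constantCoeff_X, zero_mul]
  have hsolve := DyckAux.solve_inv hB key
  rw [hG, hj]
  exact hsolve
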